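/- Let n ≥ 1, let K be a symmetric n×n real matrix, let r ∈ {1,…,n}, and let K′ be the rerooted matrix associated to K and r. Then det K′ = det K. -/
import Mathlib


open Finset Matrix

/-- The Farris transform coordinates `p` of a symmetric `n × n` matrix
`K = (k_{ij})` (with rows/columns thought of as indexed by `1, …, n`,
realized as `Fin n` via `i ↦ i.succ`), extended by a root index `0`:
`p_{0i} = p_{i0} = ∑_{j=1}^n k_{ij}` and `p_{ij} = −k_{ij}` for `i, j ≥ 1`. -/
noncomputable def farrisP {n : ℕ} (K : Matrix (Fin n) (Fin n) ℝ) :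
    Fin (n + 1) → Fin (n + 1) → ℝ := fun i j =>
  Fin.cases (motive := fun _ => ℝ)
    (Fin.cases (motive := fun _ => ℝ) 0 (fun j' => ∑ t, K j' t) j)
    (fun i' => Fin.cases (motive := fun _ => ℝ) (∑ t, K i' t)
      (fun j' => -K i' j') j) i

/-- The rerooted matrix `K′` associated to a symmetric matrix `K` and a new
root `r ∈ {1, …, n}`:  `K′_{rr} = ∑_{t=1}^n p_{0t}`, `K′_{rj} = K′_{jr} = −p_{0j}`
for `j ≠ r`, `K′_{ii} = ∑_{t=0, t≠i}^n p_{it}` for `i ≠ r`, and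
`K′_{ij} = −p_{ij}` for distinct `i, j ≠ r`. -/
noncomputable def rerootK {n : ℕ} (K : Matrix (Fin n) (Fin n) ℝ) (r : Fin n) :
    Matrix (Fin n) (Fin n) ℝ :=
  Matrix.of fun i j =>
    if i = r then
      (if j = r then ∑ t : Fin n, farrisP K 0 t.succ else -farrisP K 0 j.succ)
    else if j = r then -farrisP K 0 i.succ
    else if i = j then ∑ t ∈ Finset.univ.erase (i.succ : Fin (n + 1)), farrisP K i.succ t
    else -farrisP K i.succ j.succ

/-- The rerooted sample matrix `S′` associated to a symmetric matrix
`S = (s_{ij})` and `r`:  `s′_{rr} = s_{rr}`, `s′_{rj} = s′_{jr} = s_{rr} − s_{rj}`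
for `j ≠ r`, `s′_{ii} = s_{rr} + s_{ii} − 2 s_{ri}` for `i ≠ r`, and
`s′_{ij} = s_{rr} − s_{ri} − s_{rj} + s_{ij}` for distinct `i, j ≠ r`. -/
noncomputable def rerootS {n : ℕ} (S : Matrix (Fin n) (Fin n) ℝ) (r : Fin n) :
    Matrix (Fin n) (Fin n) ℝ :=
  Matrix.of fun i j =>
    if i = r then (if j = r then S r r else S r r - S r j)
    else if j = r then S r r - S r i
    else if i = j then S r r + S i i - 2 * S r i
    else S r r - S r i - S r j + S i j

/-- **Determinant invariance under rerooting** (part of the proof of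
Theorem 2).  For a symmetric matrix `K` and a root `r ∈ {1, …, n}`,
`det K′ = det K`. -/
theorem det_reroot_eq {n : ℕ} (hn : 1 ≤ n)
    (K : Matrix (Fin n) (Fin n) ℝ) (hK : K.IsSymm) (r : Fin n) :
    (rerootK K r).det = K.det := by
  classical
  have hs : ∀ a b, K a b = K b a := fun a b => hK.apply b a
  set R : Matrix (Fin n) (Fin n) ℝ :=
    Matrix.of (fun i j => if i = r then (-1:ℝ) else if i = j then 1 else 0) with hR
  have hRM : ∀ (M : Matrix (Fin n) (Fin n) ℝ) i j,
      (R * M) i j = if i = r then -∑ t, M t j else M i j := by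
    intro M i j
    by_cases h : i = r
    · subst h
      simp [Matrix.mul_apply, hR, neg_mul, Finset.sum_neg_distrib]
    · simp [Matrix.mul_apply, hR, h, ite_mul, Finset.sum_ite_eq]
  have hMR : ∀ (M : Matrix (Fin n) (Fin n) ℝ) i j,
      (M * Rᵀ) i j = if j = r then -∑ t, M i t else M i j := by
    intro M i j
    by_cases h : j = r
    · subst h
      simp [Matrix.mul_apply, hR, mul_neg, Finset.sum_neg_distrib]
    · simp [Matrix.mul_apply, hR, h, mul_ite, Finset.sum_ite_eq']
  have hRR : R * R = 1 := by
    ext i j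
    rw [hRM]
    by_cases h : i = r
    · rw [if_pos h]
      by_cases hj : j = r
      · subst hj
        have hv : ∀ t : Fin n, R t j = if t = j then (-1:ℝ) else 0 := by
          intro t; by_cases ht : t = j <;> simp [hR, ht]
        simp [hv, Finset.sum_ite_eq', Matrix.one_apply, h]
      · have hv : ∀ t : Fin n, R t j
            = (if t = r then (-1:ℝ) else 0) + (if t = j then 1 else 0) := by
          intro t
          by_cases h1 : t = r
          · simp [hR, h1, Ne.symm hj]
          · by_cases h2 : t = j <;> simp [hR, h1, h2, hj]
        simp [hv, Finset.sum_add_distrib, Finset.sum_ite_eq', Matrix.one_apply, h, hj,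
          Ne.symm hj]
    · simp [hR, h, Matrix.one_apply]
  have hEq : rerootK K r = R * K * Rᵀ := by
    ext i j
    rw [hMR (R * K) i j]
    by_cases hi : i = r <;> by_cases hj : j = r
    · rw [if_pos hj]
      have hv : ∀ t, (R * K) i t = -∑ s, K s t := fun t => by rw [hRM, if_pos hi]
      simp only [hv, Finset.sum_neg_distrib, neg_neg]
      simp only [rerootK, Matrix.of_apply, if_pos hi, if_pos hj, farrisP, Fin.cases_zero,
        Fin.cases_succ]
      rw [Finset.sum_comm]
    · rw [if_neg hj, hRM, if_pos hi]
      simp only [rerootK, Matrix.of_apply, if_pos hi, if_neg hj, farrisP, Fin.cases_zero,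
        Fin.cases_succ]
      congr 1
      exact Finset.sum_congr rfl fun t _ => hs j t
    · rw [if_pos hj]
      have hv : ∀ t, (R * K) i t = K i t := fun t => by rw [hRM, if_neg hi]
      simp only [hv]
      simp only [rerootK, Matrix.of_apply, if_neg hi, if_pos hj, farrisP, Fin.cases_zero,
        Fin.cases_succ]
    · rw [if_neg hj, hRM, if_neg hi]
      by_cases hij : i = j
      · subst hij
        simp only [rerootK, Matrix.of_apply, if_neg hi, if_pos rfl]
        rw [Finset.sum_erase_eq_sub (Finset.mem_univ _), Fin.sum_univ_succ]
        simp [farrisP]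
      · simp only [rerootK, Matrix.of_apply, if_neg hi, if_neg hj, if_neg hij, farrisP,
          Fin.cases_succ]
        exact neg_neg _
  rw [hEq, Matrix.det_mul, Matrix.det_mul, Matrix.det_transpose]
  have h1 : R.det * R.det = 1 := by rw [← Matrix.det_mul, hRR, Matrix.det_one]
  linear_combination K.det * h1
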